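/- arXiv:1412.3530 — 6 statements merged into one kernel-verified Lean document; each statement's English description precedes it below -/
import Mathlib

section
/- Let 0 < p ≤ 1, let x ∈ ℝ^d, and let ψ be a Borel probability measure on ℝ^d with finite first moment whose barycenter is x (i.e. ∫ y dψ(y) = x) and with ψ ≠ δ_x. Then ∫ |x−y|^p dψ(y) + |z−x|^p > ∫ |y−z|^p dψ(y) for every z ∈ ℝ^d with z ≠ x. -/
open MeasureTheory

/-- Subadditivity of `t ^ p` on nonneg reals for `0 ≤ p ≤ 1`. -/
lemma aux_rpow_add_le {a b p : ℝ} (ha : 0 ≤ a) (hb : 0 ≤ b) (hp : 0 ≤ p) (hp1 : p ≤ 1) :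
    (a + b) ^ p ≤ a ^ p + b ^ p := by
  have h := NNReal.coe_le_coe.2 (NNReal.rpow_add_le_add_rpow a.toNNReal b.toNNReal hp hp1)
  push_cast at h
  rwa [Real.coe_toNNReal a ha, Real.coe_toNNReal b hb] at h

/-- Strict subadditivity of `t ^ p` for `0 < p < 1` and positive arguments. -/
lemma aux_rpow_add_lt {a b p : ℝ} (ha : 0 < a) (hb : 0 < b) (hp0 : 0 < p) (hp1 : p < 1) :
    (a + b) ^ p < a ^ p + b ^ p := by
  have hab : 0 < a + b := by linarith
  have e : (a + b) ^ p = a * (a + b) ^ (p - 1) + b * (a + b) ^ (p - 1) := by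
    rw [← add_mul]
    rw [show (a + b) ^ p = (a + b) ^ ((p - 1) + 1) by ring_nf,
      Real.rpow_add_one (ne_of_gt hab)]
    ring
  have h1 : (a + b) ^ (p - 1) < a ^ (p - 1) :=
    Real.rpow_lt_rpow_of_neg ha (by linarith) (by linarith)
  have h2 : (a + b) ^ (p - 1) < b ^ (p - 1) :=
    Real.rpow_lt_rpow_of_neg hb (by linarith) (by linarith)
  have ea : a * a ^ (p - 1) = a ^ p := by
    nth_rewrite 1 [← Real.rpow_one a]
    rw [← Real.rpow_add ha]; ring_nf
  have eb : b * b ^ (p - 1) = b ^ p := by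
    nth_rewrite 1 [← Real.rpow_one b]
    rw [← Real.rpow_add hb]; ring_nf
  calc (a + b) ^ p = a * (a + b) ^ (p - 1) + b * (a + b) ^ (p - 1) := e
    _ < a * a ^ (p - 1) + b * b ^ (p - 1) := by
        exact add_lt_add (by exact mul_lt_mul_of_pos_left h1 ha)
          (mul_lt_mul_of_pos_left h2 hb)
    _ = a ^ p + b ^ p := by rw [ea, eb]

/-- `t ^ p ≤ 1 + t` for `t ≥ 0`, `0 < p ≤ 1`. -/
lemma aux_rpow_le_one_add {t p : ℝ} (ht : 0 ≤ t) (hp0 : 0 < p) (hp1 : p ≤ 1) :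
    t ^ p ≤ 1 + t := by
  rcases le_or_gt t 1 with h | h
  · have : t ^ p ≤ 1 := Real.rpow_le_one ht h hp0.le
    linarith
  · have : t ^ p ≤ t ^ (1 : ℝ) :=
      Real.rpow_le_rpow_of_exponent_le h.le hp1
    rw [Real.rpow_one] at this
    linarith

/-- If ψ is a probability measure with finite first moment, barycenter x, and ψ ≠ δ_x,
then the p-cost strict triangle inequality holds against any z ≠ x. -/
theorem stmt1 {d : ℕ} (p : ℝ) (hp0 : 0 < p) (hp1 : p ≤ 1)
    (x : EuclideanSpace ℝ (Fin d)) (ψ : Measure (EuclideanSpace ℝ (Fin d)))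
    [IsProbabilityMeasure ψ]
    (hmoment : Integrable (fun y => y) ψ)
    (hbar : (∫ y, y ∂ψ) = x)
    (hne : ψ ≠ Measure.dirac x)
    (z : EuclideanSpace ℝ (Fin d)) (hz : z ≠ x) :
    (∫ y, ‖y - z‖ ^ p ∂ψ) < (∫ y, ‖x - y‖ ^ p ∂ψ) + ‖z - x‖ ^ p := by
  have hxz : x - z ≠ 0 := sub_ne_zero.2 (Ne.symm hz)
  have hzx : (0:ℝ) < ‖z - x‖ := norm_pos_iff.2 (sub_ne_zero.2 hz)
  -- pointwise inequality
  have key : ∀ y : EuclideanSpace ℝ (Fin d),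
      ‖y - z‖ ^ p ≤ ‖x - y‖ ^ p + ‖z - x‖ ^ p := by
    intro y
    have tri : ‖y - z‖ ≤ ‖x - y‖ + ‖z - x‖ := by
      have := norm_sub_le_norm_sub_add_norm_sub y x z
      rwa [norm_sub_rev y x, norm_sub_rev x z] at this
    calc ‖y - z‖ ^ p ≤ (‖x - y‖ + ‖z - x‖) ^ p :=
          Real.rpow_le_rpow (norm_nonneg _) tri hp0.le
      _ ≤ ‖x - y‖ ^ p + ‖z - x‖ ^ p :=
          aux_rpow_add_le (norm_nonneg _) (norm_nonneg _) hp0.le hp1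
  -- integrabilities
  have hnorm : Integrable (fun y : EuclideanSpace ℝ (Fin d) => ‖y‖) ψ := hmoment.norm
  have hint_g : Integrable (fun y : EuclideanSpace ℝ (Fin d) => ‖y - z‖ ^ p) ψ := by
    refine Integrable.mono' (g := fun y => 1 + (‖y‖ + ‖z‖))
      (by exact (integrable_const 1).add (hnorm.add (integrable_const _)))
      (Continuous.aestronglyMeasurable ?_) (Filter.Eventually.of_forall fun y => ?_)
    · exact (continuous_id.sub continuous_const).norm.rpow_const
        (fun y => Or.inr hp0.le)
    · have h1 : ‖y - z‖ ≤ ‖y‖ + ‖z‖ := norm_sub_le _ _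
      have h2 := aux_rpow_le_one_add (norm_nonneg (y - z)) hp0 hp1
      have h3 : 0 ≤ ‖y - z‖ ^ p := Real.rpow_nonneg (norm_nonneg _) _
      show ‖‖y - z‖ ^ p‖ ≤ 1 + (‖y‖ + ‖z‖)
      rw [Real.norm_of_nonneg h3]
      linarith
  have hint_f : Integrable (fun y : EuclideanSpace ℝ (Fin d) => ‖x - y‖ ^ p) ψ := by
    refine Integrable.mono' (g := fun y => 1 + (‖x‖ + ‖y‖))
      (by exact (integrable_const 1).add ((integrable_const _).add hnorm))
      (Continuous.aestronglyMeasurable ?_) (Filter.Eventually.of_forall fun y => ?_)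
    · exact (continuous_const.sub continuous_id).norm.rpow_const
        (fun y => Or.inr hp0.le)
    · have h1 : ‖x - y‖ ≤ ‖x‖ + ‖y‖ := norm_sub_le _ _
      have h2 := aux_rpow_le_one_add (norm_nonneg (x - y)) hp0 hp1
      have h3 : 0 ≤ ‖x - y‖ ^ p := Real.rpow_nonneg (norm_nonneg _) _
      show ‖‖x - y‖ ^ p‖ ≤ 1 + (‖x‖ + ‖y‖)
      rw [Real.norm_of_nonneg h3]
      linarith
  have hint_h : Integrable
      (fun y : EuclideanSpace ℝ (Fin d) => ‖x - y‖ ^ p + ‖z - x‖ ^ p) ψ :=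
    hint_f.add (integrable_const _)
  -- integral of RHS
  have hIH : (∫ y, (‖x - y‖ ^ p + ‖z - x‖ ^ p) ∂ψ)
      = (∫ y, ‖x - y‖ ^ p ∂ψ) + ‖z - x‖ ^ p := by
    rw [integral_add hint_f (integrable_const _), integral_const]
    simp
  rw [← hIH]
  -- suppose not strict
  by_contra hcon
  push_neg at hcon
  have hle : (∫ y, ‖y - z‖ ^ p ∂ψ) ≤ ∫ y, (‖x - y‖ ^ p + ‖z - x‖ ^ p) ∂ψ :=
    integral_mono hint_g hint_h key
  have heqI : (∫ y, ((‖x - y‖ ^ p + ‖z - x‖ ^ p) - ‖y - z‖ ^ p) ∂ψ) = 0 := by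
    rw [integral_sub hint_h hint_g]
    linarith
  have hae0 : (fun y : EuclideanSpace ℝ (Fin d) =>
      (‖x - y‖ ^ p + ‖z - x‖ ^ p) - ‖y - z‖ ^ p) =ᵐ[ψ] 0 :=
    (integral_eq_zero_iff_of_nonneg
      (f := fun y => (‖x - y‖ ^ p + ‖z - x‖ ^ p) - ‖y - z‖ ^ p)
      (fun y => by simpa using key y) (hint_h.sub hint_g)).1 heqI
  have heq : ∀ᵐ y ∂ψ, ‖y - z‖ ^ p = ‖x - y‖ ^ p + ‖z - x‖ ^ p := by
    filter_upwards [hae0] with y hy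
    have : (‖x - y‖ ^ p + ‖z - x‖ ^ p) - ‖y - z‖ ^ p = 0 := hy
    linarith
  -- derive y = x a.e.
  have haex : ∀ᵐ y ∂ψ, y = x := by
    rcases lt_or_eq_of_le hp1 with hplt | hpeq
    · -- case p < 1: strict subadditivity forces y = x
      filter_upwards [heq] with y hy
      by_contra hyx
      have hyx' : (0:ℝ) < ‖y - x‖ := norm_pos_iff.2 (sub_ne_zero.2 hyx)
      have tri : ‖y - z‖ ≤ ‖y - x‖ + ‖x - z‖ := norm_sub_le_norm_sub_add_norm_sub y x z
      have hxz' : (0:ℝ) < ‖x - z‖ := norm_pos_iff.2 hxz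
      have hlt : ‖y - z‖ ^ p < ‖y - x‖ ^ p + ‖x - z‖ ^ p :=
        lt_of_le_of_lt (Real.rpow_le_rpow (norm_nonneg _) tri hp0.le)
          (aux_rpow_add_lt hyx' hxz' hp0 hplt)
      rw [norm_sub_rev y x, norm_sub_rev x z] at hlt
      linarith [hy]
    · -- case p = 1
      subst hpeq
      simp only [Real.rpow_one] at heq
      -- a.e., (y - x) and (x - z) are on the same ray
      have hray : ∀ᵐ y ∂ψ, ‖y - x‖ * ‖x - z‖ = inner ℝ (y - x) (x - z) := by
        filter_upwards [heq] with y hy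
        have hsum : ‖(y - x) + (x - z)‖ = ‖y - x‖ + ‖x - z‖ := by
          have e1 : (y - x) + (x - z) = y - z := by abel
          rw [e1, hy, norm_sub_rev x y, norm_sub_rev z x]
        have hsr : SameRay ℝ (y - x) (x - z) := sameRay_iff_norm_add.2 hsum
        obtain ⟨r, hr0, hr⟩ := hsr.exists_nonneg_right hxz
        rw [hr, norm_smul, real_inner_smul_left, real_inner_self_eq_norm_sq,
          Real.norm_of_nonneg hr0]
        ring
      -- integrate
      have hintsub : Integrable (fun y : EuclideanSpace ℝ (Fin d) => y - x) ψ :=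
        hmoment.sub (integrable_const _)
      have hIsub : (∫ y, (y - x) ∂ψ) = 0 := by
        rw [integral_sub hmoment (integrable_const _), integral_const]
        simp [hbar]
      have hIinner : (∫ y, (inner ℝ (x - z) (y - x) : ℝ) ∂ψ) = 0 := by
        rw [integral_inner hintsub, hIsub, inner_zero_right]
      have hInorm : (∫ y, ‖y - x‖ * ‖x - z‖ ∂ψ) = 0 := by
        rw [← hIinner]
        refine integral_congr_ae ?_
        filter_upwards [hray] with y hy
        rw [hy, real_inner_comm]
      have hint_nm : Integrable
          (fun y : EuclideanSpace ℝ (Fin d) => ‖y - x‖ * ‖x - z‖) ψ :=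
        hintsub.norm.mul_const _
      have hae : (fun y : EuclideanSpace ℝ (Fin d) => ‖y - x‖ * ‖x - z‖) =ᵐ[ψ] 0 := by
        rw [← integral_eq_zero_iff_of_nonneg
          (fun y => mul_nonneg (norm_nonneg _) (norm_nonneg _)) hint_nm]
        exact hInorm
      filter_upwards [hae] with y hy
      have h0 : ‖y - x‖ * ‖x - z‖ = 0 := hy
      have hxz' : (0:ℝ) < ‖x - z‖ := norm_pos_iff.2 hxz
      have : ‖y - x‖ = 0 := by
        rcases mul_eq_zero.1 h0 with h | h
        · exact h
        · exact absurd h (ne_of_gt hxz')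
      have := norm_eq_zero.1 this
      exact sub_eq_zero.1 this
  -- conclude ψ = dirac x
  have : ψ = Measure.dirac x := by
    have h1 : ψ.map (fun y => y) = ψ.map (fun _ => x) :=
      Measure.map_congr haex
    rw [Measure.map_id'] at h1
    rw [h1, Measure.map_const]
    simp
  exact hne this
end

section
/- Let 0 < p ≤ 1 and let y⁻ < y' < y⁺ be real numbers, with t ∈ (0,1) chosen so that t·y⁻ + (1−t)·y⁺ = y'. Define G(z) = t|z−y⁻|^p + (1−t)|z−y⁺|^p − |z−y'|^p. Then G is strictly increasing on the interval (y⁻, y'). -/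
/-- The function G(z) = t|z−y⁻|^p + (1−t)|z−y⁺|^p − |z−y'|^p is strictly increasing
on (y⁻, y'), where t·y⁻ + (1−t)·y⁺ = y' and 0 < p ≤ 1. -/
theorem stmt2 (p t ym yp y' : ℝ) (hp0 : 0 < p) (hp1 : p ≤ 1)
    (h1 : ym < y') (h2 : y' < yp) (ht : t ∈ Set.Ioo (0 : ℝ) 1)
    (hty : t * ym + (1 - t) * yp = y') :
    StrictMonoOn
      (fun z => t * |z - ym| ^ p + (1 - t) * |z - yp| ^ p - |z - y'| ^ p)
      (Set.Ioo ym y') := by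
  obtain ⟨ht0, ht1⟩ := ht
  apply strictMonoOn_of_deriv_pos (convex_Ioo ym y')
  · apply ContinuousOn.sub (ContinuousOn.add _ _)
    · exact ((continuous_id.sub continuous_const).abs.rpow_const
        (fun x => Or.inr hp0.le)).continuousOn
    · exact (continuous_const.mul ((continuous_id.sub continuous_const).abs.rpow_const
        (fun x => Or.inr hp0.le))).continuousOn
    · exact (continuous_const.mul ((continuous_id.sub continuous_const).abs.rpow_const
        (fun x => Or.inr hp0.le))).continuousOn
  · intro x hx
    rw [interior_Ioo] at hx
    obtain ⟨hxm, hxy⟩ := hx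
    have hxp : x < yp := hxy.trans h2
    -- derivatives of the three pieces
    have d1 : HasDerivAt (fun z : ℝ => |z - ym| ^ p) (p * (x - ym) ^ (p - 1) * 1) x := by
      have h : HasDerivAt (fun z : ℝ => (z - ym) ^ p) (p * (x - ym) ^ (p - 1) * 1) x := by
        exact (Real.hasDerivAt_rpow_const (Or.inl (by linarith : x - ym ≠ 0))).comp x
          ((hasDerivAt_id x).sub_const ym)
      apply h.congr_of_eventuallyEq
      filter_upwards [eventually_gt_nhds hxm] with z hz
      rw [abs_of_pos (by linarith)]
    have d2 : HasDerivAt (fun z : ℝ => |z - yp| ^ p) (p * (yp - x) ^ (p - 1) * (-1)) x := by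
      have h : HasDerivAt (fun z : ℝ => (yp - z) ^ p) (p * (yp - x) ^ (p - 1) * (-1)) x := by
        exact (Real.hasDerivAt_rpow_const (Or.inl (by linarith : yp - x ≠ 0))).comp x
          ((hasDerivAt_id x).const_sub yp)
      apply h.congr_of_eventuallyEq
      filter_upwards [eventually_lt_nhds hxp] with z hz
      rw [abs_of_neg (by linarith : z - yp < 0)]; ring_nf
    have d3 : HasDerivAt (fun z : ℝ => |z - y'| ^ p) (p * (y' - x) ^ (p - 1) * (-1)) x := by
      have h : HasDerivAt (fun z : ℝ => (y' - z) ^ p) (p * (y' - x) ^ (p - 1) * (-1)) x := by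
        exact (Real.hasDerivAt_rpow_const (Or.inl (by linarith : y' - x ≠ 0))).comp x
          ((hasDerivAt_id x).const_sub y')
      apply h.congr_of_eventuallyEq
      filter_upwards [eventually_lt_nhds hxy] with z hz
      rw [abs_of_neg (by linarith : z - y' < 0)]; ring_nf
    have dG : HasDerivAt
        (fun z => t * |z - ym| ^ p + (1 - t) * |z - yp| ^ p - |z - y'| ^ p)
        (t * (p * (x - ym) ^ (p - 1) * 1) + (1 - t) * (p * (yp - x) ^ (p - 1) * (-1))
          - p * (y' - x) ^ (p - 1) * (-1)) x :=
      ((d1.const_mul t).add (d2.const_mul (1 - t))).sub d3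
    rw [dG.deriv]
    have hA : 0 < (x - ym) ^ (p - 1) := Real.rpow_pos_of_pos (by linarith) _
    have hB : 0 < (yp - x) ^ (p - 1) := Real.rpow_pos_of_pos (by linarith) _
    have hBC : (yp - x) ^ (p - 1) ≤ (y' - x) ^ (p - 1) :=
      Real.rpow_le_rpow_of_nonpos (by linarith) (by linarith) (by linarith)
    nlinarith [mul_pos hp0 hA, mul_pos hp0 hB, mul_pos ht0 (mul_pos hp0 hA),
      mul_le_mul_of_nonneg_left hBC hp0.le]
end

section
/- Let 0 < p ≤ 1, let y⁻ < y' < y⁺ be real numbers, let t ∈ (0,1) satisfy t·y⁻ + (1−t)·y⁺ = y', and suppose y⁻ < x' < x ≤ y'. Then t(x'−y⁻)^p + (1−t)(y⁺−x')^p + |y'−x|^p < t(x−y⁻)^p + (1−t)(y⁺−x)^p + |y'−x'|^p. -/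
/-- Concavity increment lemma: for `0 ≤ c ≤ b`, `0 ≤ d`, `0 ≤ p ≤ 1`,
`(b+d)^p + c^p ≤ (c+d)^p + b^p`. -/
lemma rpow_increment_le {p c b d : ℝ} (hp0 : 0 ≤ p) (hp1 : p ≤ 1)
    (hc : 0 ≤ c) (hcb : c ≤ b) (hd : 0 ≤ d) :
    (b + d) ^ p + c ^ p ≤ (c + d) ^ p + b ^ p := by
  rcases eq_or_lt_of_le hcb with rfl | hcb
  · ring_nf; exact le_refl _
  rcases eq_or_lt_of_le hd with rfl | hd
  · ring_nf; exact le_refl _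
  have hcon := Real.concaveOn_rpow hp0 hp1
  set s := b - c + d with hs
  have hs0 : 0 < s := by simp only [hs]; linarith
  set lam := d / s with hlam
  set mu := (b - c) / s with hmu
  have hlam0 : 0 ≤ lam := by positivity
  have hmu0 : 0 ≤ mu := by
    apply div_nonneg (by linarith) hs0.le
  have hsum : lam + mu = 1 := by
    rw [hlam, hmu, ← add_div, div_eq_one_iff_eq hs0.ne']
    rw [hs]; ring
  have hmemc : c ∈ Set.Ici (0:ℝ) := hc
  have hmembd : b + d ∈ Set.Ici (0:ℝ) := by
    simp only [Set.mem_Ici]; linarith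
  have H1 := hcon.2 hmemc hmembd hlam0 hmu0 hsum
  have hsum' : mu + lam = 1 := by linarith
  have H2 := hcon.2 hmemc hmembd hmu0 hlam0 hsum'
  have e1 : lam * c + mu * (b + d) = b := by
    rw [hlam, hmu, div_mul_eq_mul_div, div_mul_eq_mul_div, ← add_div, div_eq_iff hs0.ne', hs]
    ring
  have e2 : mu * c + lam * (b + d) = c + d := by
    rw [hlam, hmu, div_mul_eq_mul_div, div_mul_eq_mul_div, ← add_div, div_eq_iff hs0.ne', hs]
    ring
  simp only [smul_eq_mul] at H1 H2
  rw [e1] at H1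
  rw [e2] at H2
  have k1 : lam * c ^ p + mu * c ^ p = c ^ p := by rw [← add_mul, hsum, one_mul]
  have k2 : lam * (b + d) ^ p + mu * (b + d) ^ p = (b + d) ^ p := by
    rw [← add_mul, hsum, one_mul]
  linarith

/-- The key cost comparison: swapping the targets of the two source points x' < x
strictly decreases the total p-th power transport cost. -/
theorem stmt3 (p t ym yp y' x x' : ℝ) (hp0 : 0 < p) (hp1 : p ≤ 1)
    (h1 : ym < y') (h2 : y' < yp) (ht : t ∈ Set.Ioo (0 : ℝ) 1)
    (hty : t * ym + (1 - t) * yp = y')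
    (hx1 : ym < x') (hx2 : x' < x) (hx3 : x ≤ y') :
    t * (x' - ym) ^ p + (1 - t) * (yp - x') ^ p + |y' - x| ^ p <
      t * (x - ym) ^ p + (1 - t) * (yp - x) ^ p + |y' - x'| ^ p := by
  obtain ⟨ht0, ht1⟩ := ht
  have ha1 : |y' - x| = y' - x := abs_of_nonneg (by linarith)
  have ha2 : |y' - x'| = y' - x' := abs_of_nonneg (by linarith)
  rw [ha1, ha2]
  -- A : strict increase of the first term
  have hA : (x' - ym) ^ p < (x - ym) ^ p :=
    Real.rpow_lt_rpow (by linarith) (by linarith) hp0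
  -- B : (yp - x)^p < (yp - x')^p
  have hB : (yp - x) ^ p < (yp - x') ^ p :=
    Real.rpow_lt_rpow (by linarith) (by linarith) hp0
  -- increment lemma with c = y' - x, b = yp - x, d = x - x'
  have hinc := rpow_increment_le hp0.le hp1 (c := y' - x) (b := yp - x) (d := x - x')
    (by linarith) (by linarith) (by linarith)
  have e1 : yp - x + (x - x') = yp - x' := by ring
  have e2 : y' - x + (x - x') = y' - x' := by ring
  rw [e1, e2] at hinc
  -- hinc : (yp - x')^p + (y' - x)^p ≤ (y' - x')^p + (yp - x)^p
  nlinarith [mul_lt_mul_of_pos_left hA ht0, mul_lt_mul_of_pos_left hB ht0]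
end

section
/- Let μ and ν be finite Borel measures on ℝ with equal total mass and equal first moments. Then μ ≤_c ν (i.e., ∫φ dμ ≤ ∫φ dν for every convex function φ: ℝ → ℝ) if and only if ∫(x−k)_+ dμ(x) ≤ ∫(x−k)_+ dν(x) for every real k. -/
open MeasureTheory

namespace Stmt4Aux

/-- sum of call payoffs -/
def callSum (L : List (ℝ × ℝ)) (x : ℝ) : ℝ := (L.map (fun p => p.1 * max (x - p.2) 0)).sum

@[simp] lemma callSum_nil (x : ℝ) : callSum [] x = 0 := rfl

@[simp] lemma callSum_cons (p : ℝ × ℝ) (L : List (ℝ × ℝ)) (x : ℝ) :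
    callSum (p :: L) x = p.1 * max (x - p.2) 0 + callSum L x := by
  simp [callSum]

lemma callSum_continuous (L : List (ℝ × ℝ)) : Continuous (callSum L) := by
  induction L with
  | nil => exact continuous_const
  | cons p L ih =>
    have he : callSum (p :: L) = fun x => p.1 * max (x - p.2) 0 + callSum L x :=
      funext fun x => callSum_cons p L x
    rw [he]
    exact ((continuous_const.mul ((continuous_id.sub continuous_const).max continuous_const)).add ih)

lemma callSum_lipschitz (L : List (ℝ × ℝ)) (hL : ∀ p ∈ L, 0 ≤ p.1) {x y : ℝ} (hxy : x ≤ y) :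
    callSum L y - callSum L x ≤ (L.map Prod.fst).sum * (y - x) := by
  induction L with
  | nil => simp
  | cons p L ih =>
    have hp := hL p (List.mem_cons_self)
    have ih' := ih (fun q hq => hL q (List.mem_cons_of_mem _ hq))
    simp only [callSum_cons, List.map_cons, List.sum_cons]
    have h1 : max (y - p.2) 0 - max (x - p.2) 0 ≤ y - x := by
      rcases le_total (x - p.2) 0 with h | h
      · rcases le_total (y - p.2) 0 with h2 | h2
        · simp [max_eq_right h, max_eq_right h2]; linarith
        · rw [max_eq_left h2, max_eq_right h]; linarith
      · rw [max_eq_left h, max_eq_left (by linarith : (0:ℝ) ≤ y - p.2)]; linarith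
    have h2 : p.1 * max (y - p.2) 0 - p.1 * max (x - p.2) 0 ≤ p.1 * (y - x) := by
      rw [← mul_sub]
      exact mul_le_mul_of_nonneg_left h1 hp
    nlinarith [h2, ih']

lemma callSum_mono (L : List (ℝ × ℝ)) (hL : ∀ p ∈ L, 0 ≤ p.1) {x y : ℝ} (hxy : x ≤ y) :
    callSum L x ≤ callSum L y := by
  induction L with
  | nil => simp
  | cons p L ih =>
    have hp := hL p (List.mem_cons_self)
    have ih' := ih (fun q hq => hL q (List.mem_cons_of_mem _ hq))
    simp only [callSum_cons]
    have : max (x - p.2) 0 ≤ max (y - p.2) 0 := max_le_max (by linarith) le_rfl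
    nlinarith [mul_le_mul_of_nonneg_left this hp]

lemma callSum_filter_of_le (L : List (ℝ × ℝ)) (t x : ℝ) (hx : x ≤ t) :
    callSum L x = callSum (L.filter (fun p => p.2 ≤ t)) x := by
  induction L with
  | nil => simp
  | cons p L ih =>
    by_cases h : p.2 ≤ t
    · simp [List.filter_cons, h, ih]
    · have : max (x - p.2) 0 = 0 := max_eq_right (by push_neg at h; linarith)
      simp [List.filter_cons, h, ih, this]

lemma callSum_linear (L : List (ℝ × ℝ)) (t x : ℝ) (ht : ∀ p ∈ L, p.2 ≤ t) (hx : t ≤ x) :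
    callSum L x = (L.map Prod.fst).sum * x - (L.map (fun p => p.1 * p.2)).sum := by
  induction L with
  | nil => simp
  | cons p L ih =>
    have hp := ht p (List.mem_cons_self)
    have ih' := ih (fun q hq => ht q (List.mem_cons_of_mem _ hq))
    have : max (x - p.2) 0 = x - p.2 := max_eq_left (by linarith)
    simp only [callSum_cons, List.map_cons, List.sum_cons, this, ih']
    ring

lemma filter_fst_sum_le (L : List (ℝ × ℝ)) (hL : ∀ p ∈ L, 0 ≤ p.1) (P : ℝ × ℝ → Prop)
    [DecidablePred P] : ((L.filter P).map Prod.fst).sum ≤ (L.map Prod.fst).sum := by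
  induction L with
  | nil => simp
  | cons p L ih =>
    have hp := hL p (List.mem_cons_self)
    have ih' := ih (fun q hq => hL q (List.mem_cons_of_mem _ hq))
    by_cases h : P p
    · rw [List.filter_cons, if_pos (by simpa using h)]
      simp only [List.map_cons, List.sum_cons]; linarith
    · rw [List.filter_cons, if_neg (by simpa using h)]
      simp only [List.map_cons, List.sum_cons]; linarith

/-- `f` is representable as affine + nonneg combination of calls, with total right slope `≤ σ`. -/
def Rep (f : ℝ → ℝ) (σ : ℝ) : Prop :=
  ∃ a b : ℝ, ∃ L : List (ℝ × ℝ), (∀ p ∈ L, 0 ≤ p.1) ∧ b + (L.map Prod.fst).sum ≤ σ ∧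
    ∀ x, f x = a + b * x + callSum L x

lemma Rep.mono {f : ℝ → ℝ} {σ σ' : ℝ} (h : Rep f σ) (hσ : σ ≤ σ') : Rep f σ' := by
  obtain ⟨a, b, L, h1, h2, h3⟩ := h
  exact ⟨a, b, L, h1, h2.trans hσ, h3⟩

lemma Rep.congr {f g : ℝ → ℝ} {σ : ℝ} (h : Rep f σ) (hfg : ∀ x, f x = g x) : Rep g σ := by
  obtain ⟨a, b, L, h1, h2, h3⟩ := h
  exact ⟨a, b, L, h1, h2, fun x => (hfg x) ▸ h3 x⟩

lemma rep_affine (a b σ : ℝ) (hb : b ≤ σ) : Rep (fun x => a + b * x) σ :=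
  ⟨a, b, [], by simp, by simpa using hb, fun x => by simp⟩


lemma rep_max {f : ℝ → ℝ} {σ : ℝ} (hf : Rep f σ) (α β : ℝ) (hσ : σ ≤ β) :
    Rep (fun x => max (f x) (α + β * x)) β := by
  obtain ⟨a, b, L, hL, hslope, hfx⟩ := hf
  have hfc : Continuous f := by
    have : f = fun x => a + b * x + callSum L x := funext hfx
    rw [this]
    exact (continuous_const.add (continuous_const.mul continuous_id)).add (callSum_continuous L)
  have hdmono : ∀ x y : ℝ, x ≤ y → (α + β * x) - f x ≤ (α + β * y) - f y := by
    intro x y hxy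
    have h1 := callSum_lipschitz L hL hxy
    have h2 := hfx x; have h3 := hfx y
    nlinarith [hslope, mul_le_mul_of_nonneg_right hslope (by linarith : (0:ℝ) ≤ y - x)]
  by_cases hcase1 : ∀ x, α + β * x ≤ f x
  · exact Rep.congr (Rep.mono (⟨a, b, L, hL, hslope, hfx⟩ : Rep f σ) hσ)
      fun x => (max_eq_left (hcase1 x)).symm
  · by_cases hcase2 : ∀ x, f x ≤ α + β * x
    · exact (rep_affine α β β le_rfl).congr fun x => (max_eq_right (hcase2 x)).symm
    · push_neg at hcase1 hcase2
      obtain ⟨x0, hx0⟩ := hcase1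
      obtain ⟨x1, hx1⟩ := hcase2
      have hx10 : x1 ≤ x0 := by
        by_contra hc
        push_neg at hc
        have := hdmono x0 x1 hc.le
        linarith
      have hcont : ContinuousOn (fun x => (α + β * x) - f x) (Set.Icc x1 x0) :=
        ((continuous_const.add (continuous_const.mul continuous_id)).sub hfc).continuousOn
      have h0mem : (0:ℝ) ∈ Set.Icc ((α + β * x1) - f x1) ((α + β * x0) - f x0) :=
        ⟨by linarith, by linarith⟩
      obtain ⟨t, _, ht⟩ := intermediate_value_Icc hx10 hcont h0mem
      have hdt : (α + β * t) - f t = 0 := ht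
      classical
      set L' := L.filter (fun p => p.2 ≤ t) with hL'
      set St := (L'.map Prod.fst).sum with hSt
      have hL'nonneg : ∀ p ∈ L', 0 ≤ p.1 := fun p hp => hL p (List.mem_of_mem_filter hp)
      have hStle : St ≤ (L.map Prod.fst).sum := filter_fst_sum_le L hL _
      refine ⟨a, b, L' ++ [(β - b - St, t)], ?_, ?_, ?_⟩
      · intro p hp
        rcases List.mem_append.mp hp with h | h
        · exact hL'nonneg p h
        · simp only [List.mem_singleton] at h
          subst h
          simp only
          linarith
      · simp only [List.map_append, List.sum_append, List.map_cons, List.map_nil,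
          List.sum_cons, List.sum_nil]
        simp only [← hSt]
        linarith
      · intro x
        have hsplit : callSum (L' ++ [(β - b - St, t)]) x
            = callSum L' x + (β - b - St) * max (x - t) 0 := by
          simp [callSum, List.map_append]
        show max (f x) (α + β * x) = a + b * x + callSum (L' ++ [(β - b - St, t)]) x
        rw [hsplit]
        rcases le_total x t with hxt | htx
        · have hd : α + β * x ≤ f x := by
            have := hdmono x t hxt; linarith
          rw [max_eq_right (sub_nonpos.mpr hxt), mul_zero, add_zero, max_eq_left hd]
          rw [hfx x, callSum_filter_of_le L t x hxt]
        · have hd : f x ≤ α + β * x := by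
            have := hdmono t x htx; linarith
          have hkeys : ∀ p ∈ L', p.2 ≤ t := by
            intro p hp
            exact of_decide_eq_true (List.mem_filter.mp hp).2
          have hlin : callSum L' x = St * x - (L'.map (fun p => p.1 * p.2)).sum :=
            callSum_linear L' t x hkeys htx
          have hlint : callSum L' t = St * t - (L'.map (fun p => p.1 * p.2)).sum :=
            callSum_linear L' t t hkeys le_rfl
          have hft : f t = a + b * t + callSum L' t := by
            rw [hfx t, callSum_filter_of_le L t t le_rfl]
          rw [max_eq_left (sub_nonneg.mpr htx), max_eq_right hd, hlin]
          have h0 : α + β * t = a + b * t + (St * t - (L'.map (fun p => p.1 * p.2)).sum) := by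
            rw [← hlint, ← hft]; linarith
          linear_combination h0


lemma rep_sup' {ι : Type*} [DecidableEq ι] (s : Finset ι) (hs : s.Nonempty) (A B : ι → ℝ) :
    Rep (fun x => s.sup' hs (fun i => A i + B i * x)) (s.sup' hs B) := by
  classical
  induction s using Finset.strongInduction with
  | _ s ih =>
  obtain ⟨i0, hi0s, hi0max⟩ := s.exists_max_image B hs
  by_cases hse : s.erase i0 = ∅
  · have hs1 : s = {i0} := by
      apply Finset.eq_singleton_iff_unique_mem.mpr
      refine ⟨hi0s, fun y hy => ?_⟩
      by_contra hne
      exact (Finset.ne_empty_of_mem (Finset.mem_erase.mpr ⟨hne, hy⟩)) hse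
    subst hs1
    refine Rep.congr (rep_affine (A i0) (B i0) (({i0} : Finset ι).sup' hs B) ?_)
      fun x => (Finset.sup'_singleton (b := i0) (f := fun i => A i + B i * x)).symm
    rw [Finset.sup'_singleton]
  · have hne : (s.erase i0).Nonempty := Finset.nonempty_of_ne_empty hse
    have hsub : s.erase i0 ⊂ s := Finset.erase_ssubset hi0s
    have hrep := ih (s.erase i0) hsub hne
    have hle : (s.erase i0).sup' hne B ≤ B i0 :=
      Finset.sup'_le _ _ fun i hi => hi0max i (Finset.mem_of_mem_erase hi)
    have hmax := rep_max hrep (A i0) (B i0) hle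
    have hkey : ∀ x, max ((s.erase i0).sup' hne (fun i => A i + B i * x)) (A i0 + B i0 * x)
        = s.sup' hs (fun i => A i + B i * x) := by
      intro x
      apply le_antisymm
      · apply max_le
        · exact Finset.sup'_le hne (fun i => A i + B i * x) fun i hi =>
            Finset.le_sup' (fun i => A i + B i * x) (Finset.mem_of_mem_erase hi)
        · exact Finset.le_sup' (fun i => A i + B i * x) hi0s
      · apply Finset.sup'_le
        intro i hi
        by_cases hii : i = i0
        · subst hii; exact le_max_right _ _
        · exact le_trans (Finset.le_sup' (fun i => A i + B i * x)
            (Finset.mem_erase.mpr ⟨hii, hi⟩)) (le_max_left _ _)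
    have hkey2 : B i0 ≤ s.sup' hs B := Finset.le_sup' B hi0s
    exact Rep.congr (Rep.mono hmax hkey2) hkey

section Integral

variable {μ : Measure ℝ} [IsFiniteMeasure μ]

lemma integrable_call (hμ : Integrable (fun x => x) μ) (k : ℝ) :
    Integrable (fun x => max (x - k) 0) μ := by
  have hb : Integrable (fun x : ℝ => |x| + |k|) μ := hμ.abs.add (integrable_const _)
  refine hb.mono' ?_ ?_
  · exact ((continuous_id.sub continuous_const).max continuous_const).aestronglyMeasurable
  · refine Filter.Eventually.of_forall fun x => ?_
    rw [Real.norm_eq_abs, abs_of_nonneg (le_max_right _ _)]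
    rcases le_total (x - k) 0 with h | h
    · rw [max_eq_right h]
      positivity
    · rw [max_eq_left h]
      calc x - k ≤ |x - k| := le_abs_self _
        _ ≤ |x| + |k| := abs_sub _ _

lemma integrable_callSum (hμ : Integrable (fun x => x) μ) (L : List (ℝ × ℝ)) :
    Integrable (callSum L) μ := by
  induction L with
  | nil =>
    have : callSum ([] : List (ℝ × ℝ)) = fun _ => (0:ℝ) := funext fun x => rfl
    rw [this]; exact integrable_const 0
  | cons p L ihL =>
    have : callSum (p :: L) = fun x => p.1 * max (x - p.2) 0 + callSum L x :=
      funext fun x => callSum_cons p L x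
    rw [this]
    exact ((integrable_call hμ p.2).const_mul p.1).add ihL

end Integral

lemma rep_integral {μ ν : Measure ℝ} [IsFiniteMeasure μ] [IsFiniteMeasure ν]
    (hmass : μ Set.univ = ν Set.univ)
    (hμint : Integrable (fun x => x) μ) (hνint : Integrable (fun x => x) ν)
    (hmom : (∫ x, x ∂μ) = ∫ x, x ∂ν)
    (hcall : ∀ k : ℝ, (∫ x, max (x - k) 0 ∂μ) ≤ ∫ x, max (x - k) 0 ∂ν)
    {f : ℝ → ℝ} {σ : ℝ} (hf : Rep f σ) :
    Integrable f μ ∧ Integrable f ν ∧ (∫ x, f x ∂μ) ≤ ∫ x, f x ∂ν := by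
  obtain ⟨a, b, L, hL, -, hfx⟩ := hf
  have hfe : f = fun x => (a + b * x) + callSum L x := funext fun x => hfx x
  have haffμ : Integrable (fun x : ℝ => a + b * x) μ :=
    (integrable_const a).add (hμint.const_mul b)
  have haffν : Integrable (fun x : ℝ => a + b * x) ν :=
    (integrable_const a).add (hνint.const_mul b)
  have hintμ : Integrable f μ := by
    rw [hfe]; exact haffμ.add (integrable_callSum hμint L)
  have hintν : Integrable f ν := by
    rw [hfe]; exact haffν.add (integrable_callSum hνint L)
  refine ⟨hintμ, hintν, ?_⟩
  have haffeq : (∫ x, (a + b * x) ∂μ) = ∫ x, (a + b * x) ∂ν := by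
    rw [integral_add (integrable_const a) (hμint.const_mul b),
      integral_add (integrable_const a) (hνint.const_mul b),
      integral_const, integral_const, integral_const_mul, integral_const_mul, hmom, Measure.real, Measure.real, hmass]
  have hcs : ∀ L' : List (ℝ × ℝ), (∀ p ∈ L', 0 ≤ p.1) →
      (∫ x, callSum L' x ∂μ) ≤ ∫ x, callSum L' x ∂ν := by
    intro L' hL'
    induction L' with
    | nil => simp [callSum]
    | cons p M ihM =>
      have hp := hL' p (List.mem_cons_self)
      have ihM' := ihM fun q hq => hL' q (List.mem_cons_of_mem _ hq)
      have he : ∀ x, callSum (p :: M) x = p.1 * max (x - p.2) 0 + callSum M x :=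
        callSum_cons p M
      rw [integral_congr_ae (Filter.Eventually.of_forall he),
        integral_congr_ae (Filter.Eventually.of_forall he),
        integral_add (((integrable_call hμint p.2).const_mul p.1)) (integrable_callSum hμint M),
        integral_add (((integrable_call hνint p.2).const_mul p.1)) (integrable_callSum hνint M),
        integral_const_mul, integral_const_mul]
      exact add_le_add (mul_le_mul_of_nonneg_left (hcall p.2) hp) ihM'
  calc (∫ x, f x ∂μ) = (∫ x, (a + b * x) ∂μ) + ∫ x, callSum L x ∂μ := by
        rw [hfe]
        exact integral_add haffμ (integrable_callSum hμint L)
      _ ≤ (∫ x, (a + b * x) ∂ν) + ∫ x, callSum L x ∂ν := by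
        rw [haffeq]; exact add_le_add le_rfl (hcs L hL)
      _ = ∫ x, f x ∂ν := by
        rw [hfe]
        exact (integral_add haffν (integrable_callSum hνint L)).symm


lemma exists_tangent {φ : ℝ → ℝ} (hφ : ConvexOn ℝ Set.univ φ) (q : ℝ) :
    ∃ m : ℝ, ∀ x, φ q + m * (x - q) ≤ φ x := by
  set S := (fun y => (φ q - φ y) / (q - y)) '' Set.Iio q with hS
  have hSne : S.Nonempty := ⟨_, ⟨q - 1, by simp, rfl⟩⟩
  have hub : ∀ y ∈ Set.Iio q, (φ q - φ y) / (q - y) ≤ (φ (q + 1) - φ q) / (q + 1 - q) := by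
    intro y hy
    have := hφ.slope_mono_adjacent (Set.mem_univ y) (Set.mem_univ (q + 1)) hy (by linarith)
    convert this using 2
  have hbdd : BddAbove S := by
    refine ⟨(φ (q + 1) - φ q) / (q + 1 - q), ?_⟩
    rintro z ⟨y, hy, rfl⟩
    exact hub y hy
  refine ⟨sSup S, fun x => ?_⟩
  rcases lt_trichotomy x q with hx | hx | hx
  · have hmem : (φ q - φ x) / (q - x) ∈ S := ⟨x, hx, rfl⟩
    have h1 : (φ q - φ x) / (q - x) ≤ sSup S := le_csSup hbdd hmem
    have h2 : q - x > 0 := by linarith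
    have h3 : φ q - φ x ≤ sSup S * (q - x) := by
      rwa [div_le_iff₀ h2] at h1
    nlinarith
  · subst hx; simp
  · have h1 : sSup S ≤ (φ x - φ q) / (x - q) := by
      apply csSup_le hSne
      rintro z ⟨y, hy, rfl⟩
      have := hφ.slope_mono_adjacent (Set.mem_univ y) (Set.mem_univ x) hy hx
      convert this using 2
    have h2 : x - q > 0 := by linarith
    have h3 : sSup S * (x - q) ≤ φ x - φ q := by
      rwa [le_div_iff₀ h2] at h1
    nlinarith

end Stmt4Aux


/-- Two finite measures on ℝ with equal mass and equal first moments are in convex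
order iff their call prices ∫(x−k)₊ are ordered for all strikes k. -/
theorem stmt4 (μ ν : Measure ℝ) [IsFiniteMeasure μ] [IsFiniteMeasure ν]
    (hmass : μ Set.univ = ν Set.univ)
    (hμint : Integrable (fun x => x) μ) (hνint : Integrable (fun x => x) ν)
    (hmom : (∫ x, x ∂μ) = ∫ x, x ∂ν) :
    (∀ φ : ℝ → ℝ, ConvexOn ℝ Set.univ φ → Integrable φ μ → Integrable φ ν →
        (∫ x, φ x ∂μ) ≤ ∫ x, φ x ∂ν) ↔
      (∀ k : ℝ, (∫ x, max (x - k) 0 ∂μ) ≤ ∫ x, max (x - k) 0 ∂ν) := by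
  constructor
  · intro h k
    have hconv : ConvexOn ℝ Set.univ (fun x => max (x - k) 0) := by
      refine ⟨convex_univ, ?_⟩
      intro x _ y _ p q hp hq hpq
      simp only [smul_eq_mul]
      apply max_le
      · have h1 : x - k ≤ max (x - k) 0 := le_max_left _ _
        have h2 : y - k ≤ max (y - k) 0 := le_max_left _ _
        have hk : p * k + q * k = k := by rw [← add_mul, hpq, one_mul]
        nlinarith [mul_le_mul_of_nonneg_left h1 hp, mul_le_mul_of_nonneg_left h2 hq, hk]
      · have h1 : (0:ℝ) ≤ max (x - k) 0 := le_max_right _ _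
        have h2 : (0:ℝ) ≤ max (y - k) 0 := le_max_right _ _
        positivity
    exact h _ hconv (Stmt4Aux.integrable_call hμint k) (Stmt4Aux.integrable_call hνint k)
  · intro hcall φ hφ hφμ hφν
    classical
    set e : ℕ → ℚ := fun n => (Denumerable.eqv ℚ).symm n with he
    have hesurj : Function.Surjective e := (Denumerable.eqv ℚ).symm.surjective
    choose m hm using fun q : ℚ => Stmt4Aux.exists_tangent hφ (q : ℝ)
    set A : ℕ → ℝ := fun i => φ (e i) - m (e i) * (e i) with hA
    set B : ℕ → ℝ := fun i => m (e i) with hB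
    set φn : ℕ → ℝ → ℝ := fun n x => (Finset.range (n+1)).sup'
      Finset.nonempty_range_add_one (fun i => φ (e i) + m (e i) * (x - (e i))) with hφn
    have hrep : ∀ n, ∃ σ : ℝ, Stmt4Aux.Rep (φn n) σ := by
      intro n
      refine ⟨(Finset.range (n+1)).sup' Finset.nonempty_range_add_one B, ?_⟩
      refine (Stmt4Aux.rep_sup' (Finset.range (n+1)) Finset.nonempty_range_add_one A B).congr ?_
      intro x
      refine Finset.sup'_congr _ rfl fun i _ => ?_
      simp only [hA, hB]
      ring
    have hφn_le : ∀ n x, φn n x ≤ φ x := by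
      intro n x
      exact Finset.sup'_le _ _ fun i _ => hm (e i) x
    have hmono : ∀ x : ℝ, Monotone fun n => φn n x := by
      intro x n n' hnn'
      simp only [hφn]
      exact Finset.sup'_le _ _ fun i hi => Finset.le_sup'
        (fun i => φ (e i) + m (e i) * (x - (e i)))
        (Finset.mem_range.mpr (lt_of_lt_of_le (Finset.mem_range.mp hi) (by omega)))
    have htendsto : ∀ x : ℝ, Filter.Tendsto (fun n => φn n x) Filter.atTop (nhds (φ x)) := by
      intro x
      have hbdd : BddAbove (Set.range fun n => φn n x) := by
        refine ⟨φ x, ?_⟩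
        rintro _ ⟨n, rfl⟩
        exact hφn_le n x
      have ht := tendsto_atTop_ciSup (hmono x) hbdd
      have hsup : (⨆ n, φn n x) = φ x := by
        apply le_antisymm (ciSup_le fun n => hφn_le n x)
        obtain ⟨m0, hm0⟩ := Stmt4Aux.exists_tangent hφ x
        set M := max (φ (x+2) - φ x + |m0|) 0 with hM
        set C := |M - m0| + 1 with hC
        have hCpos : 0 < C := by positivity
        apply le_of_forall_sub_le
        intro ε hε
        set δ := min 1 (ε / C) with hδ
        have hδpos : 0 < δ := lt_min one_pos (div_pos hε hCpos)
        obtain ⟨q, hq1, hq2⟩ := exists_rat_btwn (show x < x + δ by linarith)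
        have hqx1 : (q:ℝ) - x ≤ 1 := by
          have := min_le_left 1 (ε / C)
          have : (q:ℝ) < x + 1 := lt_of_lt_of_le hq2 (by linarith)
          linarith
        have hqx0 : 0 < (q:ℝ) - x := by linarith
        have hmqM : m q ≤ M := by
          rcases le_or_gt (m q) 0 with hneg | hpos
          · exact le_trans hneg (le_max_right _ _)
          · have e1 := hm q (x+2)
            have e2 := hm0 (q:ℝ)
            have h1 : (1:ℝ) ≤ (x+2) - (q:ℝ) := by linarith
            have h2 : m q ≤ m q * ((x+2) - (q:ℝ)) := le_mul_of_one_le_right hpos.le h1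
            have h3 : -|m0| ≤ m0 * ((q:ℝ) - x) := by
              nlinarith [neg_abs_le m0, abs_nonneg m0]
            have : m q ≤ φ (x+2) - φ x + |m0| := by nlinarith
            exact le_trans this (le_max_left _ _)
        have hkey : φ x - ε ≤ φ ↑q + m q * (x - ↑q) := by
          have e2 := hm0 (q:ℝ)
          have h1 : m q - m0 ≤ C := by
            have : M - m0 ≤ |M - m0| := le_abs_self _
            linarith
          have h2 : (m q - m0) * ((q:ℝ) - x) ≤ C * ((q:ℝ) - x) :=
            mul_le_mul_of_nonneg_right h1 hqx0.le
          have h3 : C * ((q:ℝ) - x) ≤ C * δ := by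
            apply mul_le_mul_of_nonneg_left _ hCpos.le
            linarith
          have h4 : C * δ ≤ ε := by
            have : δ ≤ ε / C := min_le_right _ _
            calc C * δ ≤ C * (ε / C) := mul_le_mul_of_nonneg_left this hCpos.le
              _ = ε := by field_simp
          nlinarith
        obtain ⟨i, hi⟩ := hesurj q
        have hle1 : φ ↑q + m q * (x - ↑q) ≤ φn i x := by
          have : i ∈ Finset.range (i+1) := Finset.mem_range.mpr (by omega)
          have := Finset.le_sup' (fun j => φ (e j) + m (e j) * (x - (e j))) this
          rwa [hi] at this
        have hle2 : φn i x ≤ ⨆ n, φn n x := le_ciSup hbdd i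
        linarith
      rwa [hsup] at ht
    have hint := fun n => Stmt4Aux.rep_integral hmass hμint hνint hmom hcall (hrep n).choose_spec
    have hνle : ∀ n, (∫ x, φn n x ∂ν) ≤ ∫ x, φ x ∂ν := fun n =>
      integral_mono (hint n).2.1 hφν (fun x => hφn_le n x)
    have htend : Filter.Tendsto (fun n => ∫ x, φn n x ∂μ) Filter.atTop (nhds (∫ x, φ x ∂μ)) :=
      integral_tendsto_of_tendsto_of_monotone (fun n => (hint n).1) hφμ
        (Filter.Eventually.of_forall fun x => hmono x)
        (Filter.Eventually.of_forall fun x => htendsto x)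
    exact le_of_tendsto htend
      (Filter.Eventually.of_forall fun n => ((hint n).2.2).trans (hνle n))
end

section
/- Let μ, ν be Borel probability measures on ℝ^d in convex order with μ ∧ ν = 0 (mutually singular in the lattice sense), let 0 < p ≤ 1, and let π be a minimizer of ∫|x−y|^p dπ over all martingale transport plans in MT(μ,ν) with finite cost. Then π(Δ) = 0, where Δ = {(x,x) : x ∈ ℝ^d}. -/
open MeasureTheory ProbabilityTheory
open scoped ENNReal

section Defs

variable {E : Type*} [NormedAddCommGroup E] [NormedSpace ℝ E]
  [MeasurableSpace E] [BorelSpace E]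

/-- `π` is a martingale transport plan from `μ` to `ν`: a coupling whose disintegration
kernel `κ` satisfies the barycenter (martingale) condition `∫ y dκ_x(y) = x` for μ-a.e. x. -/
def IsMartingaleTransport (μ ν : Measure E) (π : Measure (E × E)) : Prop :=
  π.map Prod.fst = μ ∧ π.map Prod.snd = ν ∧
  ∃ κ : Kernel E E, IsMarkovKernel κ ∧ π = μ.compProd κ ∧
    ∀ᵐ x ∂μ, (∫ y, y ∂(κ x)) = x

/-- Transport cost of `π` for the cost `c(x,y) = |x-y|^p`. -/
noncomputable def mcost (p : ℝ) (π : Measure (E × E)) : ℝ≥0∞ :=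
  ∫⁻ z, ENNReal.ofReal (‖z.1 - z.2‖ ^ p) ∂π

/-- `π` minimizes the `p`-cost over all martingale transport plans in `MT(μ,ν)`. -/
def IsOptimalMT (p : ℝ) (μ ν : Measure E) (π : Measure (E × E)) : Prop :=
  IsMartingaleTransport μ ν π ∧
  ∀ π' : Measure (E × E), IsMartingaleTransport μ ν π' → mcost p π ≤ mcost p π'

/-- Convex order: `∫ φ dμ ≤ ∫ φ dν` for all convex `φ` (for which the integrals exist). -/
def InConvexOrder (μ ν : Measure E) : Prop :=
  ∀ φ : E → ℝ, ConvexOn ℝ Set.univ φ → Integrable φ μ → Integrable φ ν →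
    (∫ x, φ x ∂μ) ≤ ∫ x, φ x ∂ν

end Defs

/-- If μ and ν share no common mass, then any finite-cost optimal martingale transport
puts no mass on the diagonal. -/
theorem stmt5 {d : ℕ} (μ ν : Measure (EuclideanSpace ℝ (Fin d)))
    [IsProbabilityMeasure μ] [IsProbabilityMeasure ν]
    (hco : InConvexOrder μ ν) (hdisj : μ ⊓ ν = 0)
    (p : ℝ) (hp0 : 0 < p) (hp1 : p ≤ 1)
    (π : Measure (EuclideanSpace ℝ (Fin d) × EuclideanSpace ℝ (Fin d)))
    (hopt : IsOptimalMT p μ ν π) (hfin : mcost p π < ⊤) :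
    π {z | z.1 = z.2} = 0 := by
  obtain ⟨⟨hfst, hsnd, _⟩, _⟩ := hopt
  have hΔ : MeasurableSet {z : EuclideanSpace ℝ (Fin d) × EuclideanSpace ℝ (Fin d) | z.1 = z.2} :=
    measurableSet_eq_fun measurable_fst measurable_snd
  set Δ := {z : EuclideanSpace ℝ (Fin d) × EuclideanSpace ℝ (Fin d) | z.1 = z.2} with hΔdef
  set η := (π.restrict Δ).map Prod.fst with hη
  have hrestr_le : π.restrict Δ ≤ π := Measure.restrict_le_self
  have hηle : η ≤ μ := by
    rw [hη, ← hfst]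
    exact Measure.map_mono hrestr_le measurable_fst
  have hmapeq : (π.restrict Δ).map Prod.fst = (π.restrict Δ).map Prod.snd := by
    apply Measure.map_congr
    filter_upwards [ae_restrict_mem hΔ] with z hz
    exact hz
  have hηle' : η ≤ ν := by
    rw [hη, hmapeq, ← hsnd]
    exact Measure.map_mono hrestr_le measurable_snd
  have h0 : η = 0 := le_antisymm (hdisj ▸ le_inf hηle hηle') (Measure.zero_le _)
  have : η Set.univ = π Δ := by
    rw [hη, Measure.map_apply measurable_fst MeasurableSet.univ, Set.preimage_univ,
      Measure.restrict_apply MeasurableSet.univ, Set.univ_inter]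
  rw [← this, h0]
  simp
end

section
/- Let f, g be radially symmetric probability densities on ℝ^d such that the measures μ = f dx and ν = g dx are in convex order (μ ≤_c ν). Define densities on ℝ by f₀(r) = f(r e)|r|^{d−1} and g₀(r) = g(r e)|r|^{d−1} for a fixed unit vector e (well-defined by radial symmetry), for −∞ < r < ∞. Then the one-dimensional measures f₀(r)dr and g₀(r)dr are in convex order on ℝ. -/
open MeasureTheory ProbabilityTheory
open scoped ENNReal

section Helpers15
open MeasureTheory Set Metric

-- reflection of lintegral on ℝ
lemma lint_neg_aux (w : ℝ → ℝ≥0∞) : ∫⁻ r, w (-r) = ∫⁻ r, w r := by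
  conv_rhs => rw [← Measure.map_neg_eq_self (volume : Measure ℝ)]
  have : Measure.map Neg.neg (volume : Measure ℝ)
      = Measure.map (MeasurableEquiv.neg ℝ) volume := rfl
  rw [this, lintegral_map_equiv]
  rfl

-- restricted reflection
lemma restrict_Iio_map_neg :
    (volume.restrict (Iio (0:ℝ))).map (MeasurableEquiv.neg ℝ) = volume.restrict (Ioi (0:ℝ)) := by
  ext s hs
  rw [MeasurableEquiv.map_apply, Measure.restrict_apply hs,
    Measure.restrict_apply (hs.preimage (MeasurableEquiv.neg ℝ).measurable)]
  have : (MeasurableEquiv.neg ℝ) ⁻¹' s ∩ Iio 0 = -(s ∩ Ioi 0) := by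
    ext x
    simp only [Set.mem_inter_iff, Set.mem_preimage, Set.mem_neg, Set.mem_Iio, Set.mem_Ioi]
    constructor
    · rintro ⟨h1, h2⟩; exact ⟨h1, by linarith⟩
    · rintro ⟨h1, h2⟩; exact ⟨h1, by linarith⟩
  rw [this, Measure.measure_neg]

lemma lintegral_even_split (w : ℝ → ℝ≥0∞) (hw : ∀ r, w (-r) = w r) :
    ∫⁻ r, w r = 2 * ∫⁻ r in Ioi (0:ℝ), w r := by
  have hsplit : (volume : Measure ℝ) = volume.restrict (Iio 0) + volume.restrict (Ici 0) := by
    rw [← compl_Iio, Measure.restrict_add_restrict_compl measurableSet_Iio]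
  have hIci : (volume : Measure ℝ).restrict (Ici 0) = volume.restrict (Ioi 0) :=
    (Measure.restrict_congr_set Ioi_ae_eq_Ici).symm
  have hIio : ∫⁻ r in Iio (0:ℝ), w r = ∫⁻ r in Ioi (0:ℝ), w r := by
    rw [← restrict_Iio_map_neg, lintegral_map_equiv]
    simp only [MeasurableEquiv.neg_apply]
    exact lintegral_congr fun r => (hw r).symm
  conv_lhs => rw [hsplit]
  rw [lintegral_add_measure, hIci, hIio, two_mul]


lemma lint_volumeIoiPow (n : ℕ) (u : ℝ → ℝ≥0∞) (hu : Measurable u) :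
    ∫⁻ r : Ioi (0:ℝ), u r ∂(Measure.volumeIoiPow n)
      = ∫⁻ r in Ioi (0:ℝ), ENNReal.ofReal (r ^ n) * u r := by
  rw [Measure.volumeIoiPow,
    lintegral_withDensity_eq_lintegral_mul _
      ((measurable_subtype_coe.pow_const _).ennreal_ofReal)
      (show Measurable fun r : Ioi (0:ℝ) => u r from hu.comp measurable_subtype_coe)]
  simp only [Pi.mul_apply]
  exact lintegral_subtype_comap measurableSet_Ioi fun r => ENNReal.ofReal (r ^ n) * u r

section polar
variable {d : ℕ}

local notation "Ed" => EuclideanSpace ℝ (Fin d)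

lemma polar_meas (hd : 1 ≤ d) (u : ℝ → ℝ≥0∞) (hu : Measurable u) :
    ∫⁻ x : Ed, u ‖x‖ = (volume : Measure Ed).toSphere univ
      * ∫⁻ r in Ioi (0:ℝ), ENNReal.ofReal (r ^ (d - 1)) * u r := by
  haveI : Nontrivial Ed := by
    apply Module.nontrivial_of_finrank_pos (R := ℝ)
    rw [finrank_euclideanSpace_fin]; omega
  have hfr : Module.finrank ℝ Ed = d := finrank_euclideanSpace_fin
  have hmp : MeasurePreserving ((homeomorphUnitSphereProd Ed).toMeasurableEquiv)
      ((volume : Measure Ed).comap Subtype.val)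
      ((volume : Measure Ed).toSphere.prod
        (Measure.volumeIoiPow (Module.finrank ℝ Ed - 1))) :=
    Measure.measurePreserving_homeomorphUnitSphereProd (volume : Measure Ed)
  have h2 := hmp.lintegral_map_equiv (fun p => u p.2)
    (homeomorphUnitSphereProd Ed).toMeasurableEquiv
  calc ∫⁻ x : Ed, u ‖x‖
      = ∫⁻ x in ({0}ᶜ : Set Ed), u ‖x‖ := by rw [restrict_compl_singleton]
    _ = ∫⁻ y : (({0}ᶜ : Set Ed)), u ‖(y : Ed)‖ ∂((volume : Measure Ed).comap Subtype.val) :=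
        (lintegral_subtype_comap (measurableSet_singleton 0).compl _).symm
    _ = ∫⁻ p : sphere (0:Ed) 1 × Ioi (0:ℝ), u p.2
          ∂((volume : Measure Ed).toSphere.prod
            (Measure.volumeIoiPow (Module.finrank ℝ Ed - 1))) := by
        rw [h2]
        refine lintegral_congr fun y => ?_
        simp [Homeomorph.toMeasurableEquiv_coe]
    _ = (volume : Measure Ed).toSphere univ
          * ∫⁻ r : Ioi (0:ℝ), u r ∂(Measure.volumeIoiPow (d - 1)) := by
        rw [hfr, lintegral_prod _
          (show Measurable fun p : sphere (0:Ed) 1 × Ioi (0:ℝ) => u p.2 from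
            hu.comp (measurable_subtype_coe.comp measurable_snd)).aemeasurable]
        simp only []
        rw [show (fun x : sphere (0:Ed) 1 => ∫⁻ y : Ioi (0:ℝ), u ↑(x, y).2 ∂Measure.volumeIoiPow (d-1)) = fun _ => ∫⁻ r : Ioi (0:ℝ), u r ∂Measure.volumeIoiPow (d-1) from rfl, lintegral_const, mul_comm]
    _ = (volume : Measure Ed).toSphere univ
          * ∫⁻ r in Ioi (0:ℝ), ENNReal.ofReal (r ^ (d - 1)) * u r := by
        rw [lint_volumeIoiPow _ _ hu]
end polar


section polar2
variable {d : ℕ}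

local notation "Ed" => EuclideanSpace ℝ (Fin d)

lemma polar_le (hd : 1 ≤ d) (u : ℝ → ℝ≥0∞) :
    ∫⁻ x : Ed, u ‖x‖ ≤ (volume : Measure Ed).toSphere univ
      * ∫⁻ r in Ioi (0:ℝ), ENNReal.ofReal (r ^ (d - 1)) * u r := by
  haveI : Nontrivial Ed := by
    apply Module.nontrivial_of_finrank_pos (R := ℝ)
    rw [finrank_euclideanSpace_fin]; omega
  have hfr : Module.finrank ℝ Ed = d := finrank_euclideanSpace_fin
  have hmp : MeasurePreserving ((homeomorphUnitSphereProd Ed).toMeasurableEquiv)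
      ((volume : Measure Ed).comap Subtype.val)
      ((volume : Measure Ed).toSphere.prod
        (Measure.volumeIoiPow (Module.finrank ℝ Ed - 1))) :=
    Measure.measurePreserving_homeomorphUnitSphereProd (volume : Measure Ed)
  have h2 := hmp.lintegral_map_equiv (fun p => u p.2)
    (homeomorphUnitSphereProd Ed).toMeasurableEquiv
  have step1 : ∫⁻ x : Ed, u ‖x‖
      = ∫⁻ p : sphere (0:Ed) 1 × Ioi (0:ℝ), u p.2
          ∂((volume : Measure Ed).toSphere.prod
            (Measure.volumeIoiPow (Module.finrank ℝ Ed - 1))) := by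
    calc ∫⁻ x : Ed, u ‖x‖
        = ∫⁻ x in ({0}ᶜ : Set Ed), u ‖x‖ := by rw [restrict_compl_singleton]
      _ = ∫⁻ y : (({0}ᶜ : Set Ed)), u ‖(y : Ed)‖ ∂((volume : Measure Ed).comap Subtype.val) :=
          (lintegral_subtype_comap (measurableSet_singleton 0).compl _).symm
      _ = _ := by
          rw [h2]
          refine lintegral_congr fun y => ?_
          simp [Homeomorph.toMeasurableEquiv_coe]
  rw [step1, hfr]
  -- bound the product integral
  obtain ⟨Z, hZm, hZle, hZeq⟩ := exists_measurable_le_lintegral_eq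
    ((volume : Measure Ed).toSphere.prod (Measure.volumeIoiPow (d - 1)))
    (fun p : sphere (0:Ed) 1 × Ioi (0:ℝ) => u p.2)
  rw [hZeq, lintegral_prod _ hZm.aemeasurable]
  have hinner : ∀ θ : sphere (0:Ed) 1,
      ∫⁻ r : Ioi (0:ℝ), Z (θ, r) ∂(Measure.volumeIoiPow (d - 1))
        ≤ ∫⁻ r in Ioi (0:ℝ), ENNReal.ofReal (r ^ (d - 1)) * u r := by
    intro θ
    have h1 : ∫⁻ r : Ioi (0:ℝ), Z (θ, r) ∂(Measure.volumeIoiPow (d - 1))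
        ≤ ∫⁻ r : Ioi (0:ℝ), u r ∂(Measure.volumeIoiPow (d - 1)) :=
      lintegral_mono fun r => hZle (θ, r)
    refine h1.trans ?_
    -- now bound ∫⁻ over volumeIoiPow for arbitrary u
    rw [Measure.volumeIoiPow,
      lintegral_withDensity_eq_lintegral_mul_non_measurable _
        ((measurable_subtype_coe.pow_const _).ennreal_ofReal)
        (Filter.Eventually.of_forall fun r => ENNReal.ofReal_lt_top)]
    obtain ⟨W, hWm, hWle, hWeq⟩ := exists_measurable_le_lintegral_eq
      ((volume : Measure ℝ).comap (Subtype.val : Ioi (0:ℝ) → ℝ))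
      ((fun r : Ioi (0:ℝ) => ENNReal.ofReal (r.1 ^ (d-1))) * fun r : Ioi (0:ℝ) => u r.1)
    rw [hWeq]
    classical
    set Wt : ℝ → ℝ≥0∞ := fun r => if h : r ∈ Ioi (0:ℝ) then W ⟨r, h⟩ else 0 with hWt
    have hWcomp : ∀ y : Ioi (0:ℝ), W y = Wt y.1 := by
      intro y; rw [hWt]; simp
    calc ∫⁻ y : Ioi (0:ℝ), W y ∂((volume : Measure ℝ).comap Subtype.val)
        = ∫⁻ y : Ioi (0:ℝ), Wt y.1 ∂((volume : Measure ℝ).comap Subtype.val) :=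
          lintegral_congr hWcomp
      _ = ∫⁻ r in Ioi (0:ℝ), Wt r := lintegral_subtype_comap measurableSet_Ioi _
      _ ≤ ∫⁻ r in Ioi (0:ℝ), ENNReal.ofReal (r ^ (d - 1)) * u r := by
          refine lintegral_mono fun r => ?_
          rw [hWt]
          by_cases h : r ∈ Ioi (0:ℝ)
          · simp only [h, dif_pos]
            exact hWle ⟨r, h⟩
          · simp [h]
  calc ∫⁻ θ : sphere (0:Ed) 1, ∫⁻ r : Ioi (0:ℝ), Z (θ, r) ∂(Measure.volumeIoiPow (d-1))
        ∂(volume : Measure Ed).toSphere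
      ≤ ∫⁻ _ : sphere (0:Ed) 1, (∫⁻ r in Ioi (0:ℝ), ENNReal.ofReal (r ^ (d - 1)) * u r)
        ∂(volume : Measure Ed).toSphere := lintegral_mono hinner
    _ = (volume : Measure Ed).toSphere univ
        * ∫⁻ r in Ioi (0:ℝ), ENNReal.ofReal (r ^ (d - 1)) * u r := by
        rw [lintegral_const, mul_comm]
end polar2


lemma withDensity_eq_of_le {α : Type*} [MeasurableSpace α] (μ : Measure α)
    (f f' : α → ℝ≥0∞) (hle : ∀ a, f' a ≤ f a)
    (heq : ∫⁻ a, f' a ∂μ = ∫⁻ a, f a ∂μ) (hfin : ∫⁻ a, f a ∂μ ≠ ∞) :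
    μ.withDensity f' = μ.withDensity f := by
  ext s hs
  rw [withDensity_apply _ hs, withDensity_apply _ hs]
  have h1 : ∫⁻ a in s, f' a ∂μ ≤ ∫⁻ a in s, f a ∂μ := lintegral_mono hle
  have h2 : ∫⁻ a in sᶜ, f' a ∂μ ≤ ∫⁻ a in sᶜ, f a ∂μ := lintegral_mono hle
  have hsum : ∫⁻ a in s, f a ∂μ + ∫⁻ a in sᶜ, f a ∂μ = ∫⁻ a, f a ∂μ := by
    rw [← lintegral_add_measure, Measure.restrict_add_restrict_compl hs]
  have hsum' : ∫⁻ a in s, f' a ∂μ + ∫⁻ a in sᶜ, f' a ∂μ = ∫⁻ a, f' a ∂μ := by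
    rw [← lintegral_add_measure, Measure.restrict_add_restrict_compl hs]
  have hc : ∫⁻ a in sᶜ, f a ∂μ ≠ ∞ := by
    refine ne_top_of_le_ne_top hfin ?_
    rw [← hsum]; exact le_add_self
  refine le_antisymm h1 ?_
  have : ∫⁻ a in s, f a ∂μ + ∫⁻ a in sᶜ, f a ∂μ ≤ ∫⁻ a in s, f' a ∂μ + ∫⁻ a in sᶜ, f a ∂μ := by
    rw [hsum, ← heq, ← hsum']
    exact add_le_add le_rfl h2
  exact (ENNReal.add_le_add_iff_right hc).mp this

lemma key {d : ℕ} (hd : 1 ≤ d) (f : EuclideanSpace ℝ (Fin d) → ℝ)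
    (hfrad : ∀ x y, ‖x‖ = ‖y‖ → f x = f y)
    (e : EuclideanSpace ℝ (Fin d)) (he : ‖e‖ = 1)
    (hμ : IsProbabilityMeasure (volume.withDensity fun x => ENNReal.ofReal (f x))) :
    ∃ h₁ : ℝ → ℝ≥0∞, Measurable h₁ ∧ (∀ r, h₁ (-r) = h₁ r) ∧
      (volume.withDensity fun r : ℝ => ENNReal.ofReal (f (r • e) * |r| ^ (d - 1)))
        = volume.withDensity h₁ ∧
      ∀ v : ℝ → ℝ≥0∞, Measurable v → (∀ r, v (-r) = v r) →
        2 * ∫⁻ x, v ‖x‖ ∂(volume.withDensity fun x : EuclideanSpace ℝ (Fin d) => ENNReal.ofReal (f x))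
          = (volume : Measure (EuclideanSpace ℝ (Fin d))).toSphere Set.univ
            * ∫⁻ r, v r ∂(volume.withDensity fun r : ℝ => ENNReal.ofReal (f (r • e) * |r| ^ (d - 1))) := by
  classical
  set wf : ℝ → ℝ≥0∞ := fun r => ENNReal.ofReal (f (r • e) * |r| ^ (d - 1)) with hwf
  set C : ℝ≥0∞ := (volume : Measure (EuclideanSpace ℝ (Fin d))).toSphere Set.univ with hCdef
  haveI : Nontrivial (EuclideanSpace ℝ (Fin d)) := by
    apply Module.nontrivial_of_finrank_pos (R := ℝ)
    rw [finrank_euclideanSpace_fin]; omega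
  have hnorm_smul : ∀ r : ℝ, ‖r • e‖ = |r| := fun r => by
    rw [norm_smul, he, mul_one, Real.norm_eq_abs]
  have hwfeven : ∀ r, wf (-r) = wf r := fun r => by
    rw [hwf]
    simp only
    rw [hfrad ((-r) • e) (r • e) (by rw [hnorm_smul, hnorm_smul, abs_neg]), abs_neg]
  have hrad : ∀ x : EuclideanSpace ℝ (Fin d), f x = f (‖x‖ • e) := fun x =>
    hfrad _ _ (by rw [hnorm_smul, abs_of_nonneg (norm_nonneg x)])
  have hμ1 : ∫⁻ x, ENNReal.ofReal (f x) ∂(volume : Measure (EuclideanSpace ℝ (Fin d))) = 1 := by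
    have h := hμ.measure_univ
    rwa [withDensity_apply _ MeasurableSet.univ, Measure.restrict_univ] at h
  have hC0 : C ≠ 0 := by
    rw [hCdef, Measure.toSphere_apply_univ, finrank_euclideanSpace_fin]
    exact mul_ne_zero (Nat.cast_ne_zero.mpr (by omega))
      ((measure_ball_pos volume (0 : EuclideanSpace ℝ (Fin d)) one_pos).ne')
  have hCt : C ≠ ∞ := by
    rw [hCdef, Measure.toSphere_apply_univ, finrank_euclideanSpace_fin]
    exact ENNReal.mul_ne_top (ENNReal.natCast_ne_top d) measure_ball_lt_top.ne
  have hwf_pos : ∀ r : ℝ, 0 < r →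
      ENNReal.ofReal (r ^ (d - 1)) * ENNReal.ofReal (f (r • e)) = wf r := fun r hr => by
    rw [hwf]
    simp only
    rw [abs_of_pos hr, ← ENNReal.ofReal_mul (pow_nonneg hr.le _), mul_comm]
  -- Step A
  have hLHS : ∫⁻ x : EuclideanSpace ℝ (Fin d), ENNReal.ofReal (f (‖x‖ • e)) ∂volume = 1 := by
    rw [← hμ1]; exact lintegral_congr fun x => by rw [← hrad x]
  have hIoi_wf : ∫⁻ r in Ioi (0:ℝ), ENNReal.ofReal (r ^ (d-1)) * ENNReal.ofReal (f (r • e))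
      = ∫⁻ r in Ioi (0:ℝ), wf r := by
    rw [← lintegral_indicator measurableSet_Ioi, ← lintegral_indicator measurableSet_Ioi]
    refine lintegral_congr fun r => ?_
    by_cases h : r ∈ Ioi (0:ℝ)
    · rw [indicator_of_mem h, indicator_of_mem h]; exact hwf_pos r h
    · rw [indicator_of_notMem h, indicator_of_notMem h]
  have hA : 1 ≤ C * ∫⁻ r in Ioi (0:ℝ), wf r := by
    rw [← hIoi_wf, ← hLHS]
    exact polar_le hd (fun r => ENNReal.ofReal (f (r • e)))
  -- Step B: minorant
  obtain ⟨h₀, h₀m, h₀le, h₀eq⟩ := exists_measurable_le_lintegral_eq (volume : Measure ℝ) wf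
  set h₁ : ℝ → ℝ≥0∞ := fun r => max (h₀ r) (h₀ (-r)) with hh₁
  have h₁m : Measurable h₁ := h₀m.max (h₀m.comp measurable_neg)
  have h₁even : ∀ r, h₁ (-r) = h₁ r := fun r => by rw [hh₁]; simp only [neg_neg]; exact max_comm _ _
  have h₁le : ∀ r, h₁ r ≤ wf r := fun r =>
    max_le (h₀le r) ((h₀le (-r)).trans (hwfeven r).le)
  have h₁eq : ∫⁻ r, h₁ r = ∫⁻ r, wf r :=
    le_antisymm (lintegral_mono h₁le)
      (h₀eq.trans_le (lintegral_mono fun r => le_max_left (h₀ r) (h₀ (-r))))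
  -- Step C : q and F₁
  set q : ℝ → ℝ≥0∞ := fun r => if r = 0 then 0 else h₁ r / ENNReal.ofReal (r ^ (d - 1))
    with hq
  have hqm : Measurable q := by
    refine Measurable.ite ?_ measurable_const
      (h₁m.div ((measurable_id.pow_const _).ennreal_ofReal))
    exact measurableSet_eq
  have hq_mul : ∀ r : ℝ, 0 < r → ENNReal.ofReal (r ^ (d - 1)) * q r = h₁ r := fun r hr => by
    rw [hq]
    simp only [if_neg hr.ne']
    exact ENNReal.mul_div_cancel (ENNReal.ofReal_pos.mpr (pow_pos hr _)).ne'
      ENNReal.ofReal_ne_top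
  have hq_le : ∀ x : EuclideanSpace ℝ (Fin d), q ‖x‖ ≤ ENNReal.ofReal (f x) := fun x => by
    by_cases hx : ‖x‖ = 0
    · rw [hq]; simp [hx]
    · have hx' : (0:ℝ) < ‖x‖ := lt_of_le_of_ne (norm_nonneg x) (Ne.symm hx)
      rw [hq]
      simp only [if_neg hx]
      rw [ENNReal.div_le_iff (ENNReal.ofReal_pos.mpr (pow_pos hx' _)).ne'
        ENNReal.ofReal_ne_top]
      calc h₁ ‖x‖ ≤ wf ‖x‖ := h₁le _
        _ = ENNReal.ofReal (f x) * ENNReal.ofReal (‖x‖ ^ (d - 1)) := by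
            rw [← hwf_pos _ hx', mul_comm, ← hrad x]
  -- Step D : polar computations
  have hIoi_q : ∫⁻ r in Ioi (0:ℝ), ENNReal.ofReal (r ^ (d - 1)) * q r
      = ∫⁻ r in Ioi (0:ℝ), h₁ r := by
    rw [← lintegral_indicator measurableSet_Ioi, ← lintegral_indicator measurableSet_Ioi]
    refine lintegral_congr fun r => ?_
    by_cases h : r ∈ Ioi (0:ℝ)
    · rw [indicator_of_mem h, indicator_of_mem h]; exact hq_mul r h
    · rw [indicator_of_notMem h, indicator_of_notMem h]
  have hq_polar : ∫⁻ x : EuclideanSpace ℝ (Fin d), q ‖x‖ ∂volume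
      = C * ∫⁻ r in Ioi (0:ℝ), h₁ r := by
    rw [polar_meas hd q hqm, hIoi_q]
  have hsplit_h₁ : ∫⁻ r, h₁ r = 2 * ∫⁻ r in Ioi (0:ℝ), h₁ r := lintegral_even_split h₁ h₁even
  have hsplit_wf : ∫⁻ r, wf r = 2 * ∫⁻ r in Ioi (0:ℝ), wf r := lintegral_even_split wf hwfeven
  have hq_le_one : ∫⁻ x : EuclideanSpace ℝ (Fin d), q ‖x‖ ∂volume ≤ 1 := by
    rw [← hμ1]; exact lintegral_mono hq_le
  have hI1'top : ∫⁻ r in Ioi (0:ℝ), h₁ r ≠ ∞ := by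
    intro htop
    rw [htop, ENNReal.mul_top hC0] at hq_polar
    rw [hq_polar] at hq_le_one
    simp at hq_le_one
  have hwf_fin : ∫⁻ r, wf r ≠ ∞ := by
    rw [← h₁eq, hsplit_h₁]
    exact ENNReal.mul_ne_top (by norm_num) hI1'top
  have hI1_eq : ∫⁻ r in Ioi (0:ℝ), wf r = ∫⁻ r in Ioi (0:ℝ), h₁ r := by
    have h2 : (2:ℝ≥0∞) * ∫⁻ r in Ioi (0:ℝ), wf r = 2 * ∫⁻ r in Ioi (0:ℝ), h₁ r := by
      rw [← hsplit_wf, ← hsplit_h₁, h₁eq]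
    exact ((ENNReal.mul_right_inj (by norm_num) (by norm_num)).mp h2).symm ▸ rfl
  -- ∫⁻ q‖x‖ = 1
  have hq_one : ∫⁻ x : EuclideanSpace ℝ (Fin d), q ‖x‖ ∂volume = 1 := by
    refine le_antisymm hq_le_one ?_
    calc (1:ℝ≥0∞) ≤ C * ∫⁻ r in Ioi (0:ℝ), wf r := hA
      _ = C * ∫⁻ r in Ioi (0:ℝ), h₁ r := by rw [hI1_eq]
      _ = ∫⁻ x : EuclideanSpace ℝ (Fin d), q ‖x‖ ∂volume := hq_polar.symm
  -- withDensity identifications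
  have hμ_eq : (volume.withDensity fun x : EuclideanSpace ℝ (Fin d) => ENNReal.ofReal (f x))
      = volume.withDensity fun x : EuclideanSpace ℝ (Fin d) => q ‖x‖ :=
    (withDensity_eq_of_le _ _ _ hq_le (by rw [hq_one, hμ1]) (by rw [hμ1]; exact ENNReal.one_ne_top)).symm
  have hm_eq : volume.withDensity wf = volume.withDensity h₁ :=
    (withDensity_eq_of_le _ _ _ h₁le h₁eq hwf_fin).symm
  refine ⟨h₁, h₁m, h₁even, hm_eq, ?_⟩
  -- the bridge
  intro v hv hveven
  have hL : ∫⁻ x, v ‖x‖ ∂(volume.withDensity fun x : EuclideanSpace ℝ (Fin d) => ENNReal.ofReal (f x))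
      = C * ∫⁻ r in Ioi (0:ℝ), h₁ r * v r := by
    rw [hμ_eq, lintegral_withDensity_eq_lintegral_mul _
      (show Measurable fun x : EuclideanSpace ℝ (Fin d) => q ‖x‖ from hqm.comp measurable_norm)
      (show Measurable fun x : EuclideanSpace ℝ (Fin d) => v ‖x‖ from hv.comp measurable_norm)]
    have : ((fun x : EuclideanSpace ℝ (Fin d) => q ‖x‖) * fun x => v ‖x‖)
        = fun x : EuclideanSpace ℝ (Fin d) => (fun r => q r * v r) ‖x‖ := rfl
    rw [this, polar_meas hd (fun r => q r * v r) (hqm.mul hv)]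
    congr 1
    rw [← lintegral_indicator measurableSet_Ioi, ← lintegral_indicator measurableSet_Ioi]
    refine lintegral_congr fun r => ?_
    by_cases h : r ∈ Ioi (0:ℝ)
    · rw [indicator_of_mem h, indicator_of_mem h, ← mul_assoc, hq_mul r h]
    · rw [indicator_of_notMem h, indicator_of_notMem h]
  have hR : ∫⁻ r, v r ∂(volume.withDensity wf) = 2 * ∫⁻ r in Ioi (0:ℝ), h₁ r * v r := by
    rw [hm_eq, lintegral_withDensity_eq_lintegral_mul _ h₁m
      (show Measurable fun r : ℝ => v r from hv)]
    have : ((fun r => h₁ r) * fun r => v r) = fun r => h₁ r * v r := rfl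
    rw [this]
    exact lintegral_even_split _ fun r => by rw [h₁even, hveven]
  rw [hL, hR, ← mul_assoc, ← mul_assoc, mul_comm (2:ℝ≥0∞) C]

end Helpers15

open MeasureTheory Set Metric in
/-- If radially symmetric densities f, g on ℝ^d give measures in convex order, then the
induced one-dimensional densities f₀(r) = f(r·e)|r|^{d−1}, g₀(r) = g(r·e)|r|^{d−1}
give measures in convex order on ℝ. -/
theorem stmt15 {d : ℕ} (hd : 1 ≤ d) (f g : EuclideanSpace ℝ (Fin d) → ℝ)
    (hf0 : ∀ x, 0 ≤ f x) (hg0 : ∀ x, 0 ≤ g x)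
    (hfrad : ∀ x y, ‖x‖ = ‖y‖ → f x = f y)
    (hgrad : ∀ x y, ‖x‖ = ‖y‖ → g x = g y)
    (e : EuclideanSpace ℝ (Fin d)) (he : ‖e‖ = 1)
    (hμ : IsProbabilityMeasure (volume.withDensity fun x => ENNReal.ofReal (f x)))
    (hν : IsProbabilityMeasure (volume.withDensity fun x => ENNReal.ofReal (g x)))
    (hco : InConvexOrder (volume.withDensity fun x => ENNReal.ofReal (f x))
      (volume.withDensity fun x => ENNReal.ofReal (g x))) :
    InConvexOrder
      (volume.withDensity fun r : ℝ => ENNReal.ofReal (f (r • e) * |r| ^ (d - 1)))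
      (volume.withDensity fun r : ℝ => ENNReal.ofReal (g (r • e) * |r| ^ (d - 1))) := by
  classical
  obtain ⟨h₁, h₁m, h₁even, hmf_eq, hbf⟩ := key hd f hfrad e he hμ
  obtain ⟨k₁, k₁m, k₁even, hmg_eq, hbg⟩ := key hd g hgrad e he hν
  intro φ hφc hφf hφg
  set mf : Measure ℝ := volume.withDensity fun r : ℝ => ENNReal.ofReal (f (r • e) * |r| ^ (d - 1)) with hmfdef
  set mg : Measure ℝ := volume.withDensity fun r : ℝ => ENNReal.ofReal (g (r • e) * |r| ^ (d - 1)) with hmgdef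
  set C : ℝ≥0∞ := (volume : Measure (EuclideanSpace ℝ (Fin d))).toSphere Set.univ with hCdef
  haveI : Nontrivial (EuclideanSpace ℝ (Fin d)) :=
    ⟨⟨e, 0, fun h => by rw [h, norm_zero] at he; exact one_ne_zero he.symm⟩⟩
  have hC0 : C ≠ 0 := by
    rw [hCdef, Measure.toSphere_apply_univ, finrank_euclideanSpace_fin]
    exact mul_ne_zero (Nat.cast_ne_zero.mpr (by omega))
      ((measure_ball_pos volume (0 : EuclideanSpace ℝ (Fin d)) one_pos).ne')
  have hCt : C ≠ ∞ := by
    rw [hCdef, Measure.toSphere_apply_univ, finrank_euclideanSpace_fin]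
    exact ENNReal.mul_ne_top (ENNReal.natCast_ne_top d) measure_ball_lt_top.ne
  -- symmetry of the 1d measures
  have hmap : ∀ (h : ℝ → ℝ≥0∞), Measurable h → (∀ r, h (-r) = h r) →
      (volume.withDensity h).map (MeasurableEquiv.neg ℝ) = volume.withDensity h := by
    intro h hm hev
    ext s hs
    rw [MeasurableEquiv.map_apply, withDensity_apply _ hs,
      withDensity_apply _ (hs.preimage (MeasurableEquiv.neg ℝ).measurable)]
    have hmapneg : (volume : Measure ℝ).map Neg.neg = volume := Measure.map_neg_eq_self volume
    conv_rhs => rw [← hmapneg]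
    rw [setLIntegral_map hs hm measurable_neg]
    exact lintegral_congr fun r => (hev r).symm
  have hmfsym : mf.map (MeasurableEquiv.neg ℝ) = mf := by
    rw [hmf_eq]; exact hmap h₁ h₁m h₁even
  have hmgsym : mg.map (MeasurableEquiv.neg ℝ) = mg := by
    rw [hmg_eq]; exact hmap k₁ k₁m k₁even
  -- continuity of φ
  have hφcont : Continuous φ := by
    rw [← continuousOn_univ]; exact hφc.continuousOn isOpen_univ
  -- symmetrization ψ
  set ψ : ℝ → ℝ := fun r => (φ r + φ (-r)) / 2 with hψdef
  have hψcont : Continuous ψ := (hφcont.add (hφcont.comp continuous_neg)).div_const 2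
  have hψeven : ∀ r, ψ (-r) = ψ r := fun r => by rw [hψdef]; simp only [neg_neg]; ring
  have hψconv : ConvexOn ℝ Set.univ ψ := by
    refine ⟨convex_univ, fun x _ y _ a b ha hb hab => ?_⟩
    have h1 := hφc.2 (Set.mem_univ x) (Set.mem_univ y) ha hb hab
    have h2 := hφc.2 (Set.mem_univ (-x)) (Set.mem_univ (-y)) ha hb hab
    simp only [smul_eq_mul] at h1 h2 ⊢
    rw [hψdef]
    simp only
    have hneg : -(a * x + b * y) = a * (-x) + b * (-y) := by ring
    rw [hneg]
    linarith
  -- integrability under reflection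
  have hnegint : ∀ m : Measure ℝ, m.map (MeasurableEquiv.neg ℝ) = m → Integrable φ m →
      Integrable (fun r => φ (-r)) m := by
    intro m hsym hint
    have h2 := (integrable_map_equiv (MeasurableEquiv.neg ℝ) φ).mp (by rwa [hsym])
    simpa [Function.comp_def] using h2
  have hnegeq : ∀ m : Measure ℝ, m.map (MeasurableEquiv.neg ℝ) = m →
      ∫ r, φ (-r) ∂m = ∫ r, φ r ∂m := by
    intro m hsym
    conv_rhs => rw [← hsym, integral_map_equiv]
    simp
  have hψint_f : Integrable ψ mf := (hφf.add (hnegint mf hmfsym hφf)).div_const 2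
  have hψint_g : Integrable ψ mg := (hφg.add (hnegint mg hmgsym hφg)).div_const 2
  have hψeq_f : ∫ r, ψ r ∂mf = ∫ r, φ r ∂mf := by
    rw [hψdef]
    simp only
    rw [integral_div, integral_add hφf (hnegint mf hmfsym hφf), hnegeq mf hmfsym]
    ring
  have hψeq_g : ∫ r, ψ r ∂mg = ∫ r, φ r ∂mg := by
    rw [hψdef]
    simp only
    rw [integral_div, integral_add hφg (hnegint mg hmgsym hφg), hnegeq mg hmgsym]
    ring
  suffices hmain : ∫ r, ψ r ∂mf ≤ ∫ r, ψ r ∂mg by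
    rw [hψeq_f, hψeq_g] at hmain; exact hmain
  -- ψ is nondecreasing on [0, ∞)
  have hmono : ∀ a b : ℝ, 0 ≤ a → a ≤ b → ψ a ≤ ψ b := by
    intro a b ha hab
    rcases eq_or_lt_of_le (ha.trans hab) with hb | hb
    · have ha0 : a = 0 := le_antisymm (hab.trans hb.symm.le) ha
      rw [ha0, ← hb]
    · have h2b : (0:ℝ) < 2 * b := by linarith
      have ht0 : 0 ≤ (a + b) / (2 * b) := div_nonneg (by linarith) h2b.le
      have ht1 : 0 ≤ 1 - (a + b) / (2 * b) := by
        have : (a + b) / (2 * b) ≤ 1 := (div_le_one h2b).mpr (by linarith)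
        linarith
      have hcomb : (a + b) / (2 * b) * b + (1 - (a + b) / (2 * b)) * (-b) = a := by
        field_simp; ring
      have hcvx := hψconv.2 (Set.mem_univ b) (Set.mem_univ (-b)) ht0 ht1 (by ring)
      simp only [smul_eq_mul] at hcvx
      rw [hcomb, hψeven] at hcvx
      calc ψ a ≤ (a + b) / (2 * b) * ψ b + (1 - (a + b) / (2 * b)) * ψ b := hcvx
        _ = ψ b := by ring
  -- the radial lift of ψ
  set Ψ : EuclideanSpace ℝ (Fin d) → ℝ := fun x => ψ ‖x‖ with hΨdef
  have hΨconv : ConvexOn ℝ Set.univ Ψ := by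
    refine ⟨convex_univ, fun x _ y _ a b ha hb hab => ?_⟩
    simp only [hΨdef, smul_eq_mul]
    calc ψ ‖a • x + b • y‖ ≤ ψ (a * ‖x‖ + b * ‖y‖) := by
          refine hmono _ _ (norm_nonneg _) ?_
          calc ‖a • x + b • y‖ ≤ ‖a • x‖ + ‖b • y‖ := norm_add_le _ _
            _ = a * ‖x‖ + b * ‖y‖ := by
                rw [norm_smul, norm_smul, Real.norm_eq_abs, Real.norm_eq_abs,
                  abs_of_nonneg ha, abs_of_nonneg hb]
      _ ≤ a * ψ ‖x‖ + b * ψ ‖y‖ := by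
          have := hψconv.2 (Set.mem_univ ‖x‖) (Set.mem_univ ‖y‖) ha hb hab
          simpa using this
  have hΨcont : Continuous Ψ := hψcont.comp continuous_norm
  -- bridges
  have hvplus : Measurable fun r : ℝ => ENNReal.ofReal (ψ r) :=
    ENNReal.measurable_ofReal.comp hψcont.measurable
  have hvminus : Measurable fun r : ℝ => ENNReal.ofReal (-ψ r) :=
    ENNReal.measurable_ofReal.comp hψcont.neg.measurable
  have hvabs : Measurable fun r : ℝ => ENNReal.ofReal |ψ r| :=
    ENNReal.measurable_ofReal.comp hψcont.abs.measurable
  have hbfp := hbf _ hvplus (fun r => by rw [hψeven])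
  have hbfm := hbf _ hvminus (fun r => by rw [hψeven])
  have hbfa := hbf _ hvabs (fun r => by rw [hψeven])
  have hbgp := hbg _ hvplus (fun r => by rw [hψeven])
  have hbgm := hbg _ hvminus (fun r => by rw [hψeven])
  have hbga := hbg _ hvabs (fun r => by rw [hψeven])
  -- finiteness on the 1d side
  have habsnn : ∀ r : ℝ, (‖ψ r‖₊ : ℝ≥0∞) = ENNReal.ofReal |ψ r| := fun r => by
    rw [← enorm_eq_nnnorm, Real.enorm_eq_ofReal_abs]
  have hfinf : ∫⁻ r, ENNReal.ofReal |ψ r| ∂mf ≠ ∞ := by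
    have h := hψint_f.hasFiniteIntegral
    rw [HasFiniteIntegral] at h
    rw [← lintegral_congr habsnn]
    exact h.ne
  have hfing : ∫⁻ r, ENNReal.ofReal |ψ r| ∂mg ≠ ∞ := by
    have h := hψint_g.hasFiniteIntegral
    rw [HasFiniteIntegral] at h
    rw [← lintegral_congr habsnn]
    exact h.ne
  -- integrability of Ψ on the d-dim side
  have hΨint : ∀ (F : EuclideanSpace ℝ (Fin d) → ℝ) (m1 : Measure ℝ),
      (2 * ∫⁻ x, ENNReal.ofReal |ψ ‖x‖| ∂(volume.withDensity fun x : EuclideanSpace ℝ (Fin d) => ENNReal.ofReal (F x))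
        = C * ∫⁻ r, ENNReal.ofReal |ψ r| ∂m1) →
      (∫⁻ r, ENNReal.ofReal |ψ r| ∂m1 ≠ ∞) →
      Integrable Ψ (volume.withDensity fun x : EuclideanSpace ℝ (Fin d) => ENNReal.ofReal (F x)) := by
    intro F m1 hbridge hfin
    constructor
    · exact hΨcont.aestronglyMeasurable
    · rw [HasFiniteIntegral]
      have heq : ∫⁻ x, (‖Ψ x‖₊ : ℝ≥0∞) ∂(volume.withDensity fun x : EuclideanSpace ℝ (Fin d) => ENNReal.ofReal (F x))
          = ∫⁻ x, ENNReal.ofReal |ψ ‖x‖| ∂(volume.withDensity fun x : EuclideanSpace ℝ (Fin d) => ENNReal.ofReal (F x)) :=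
        lintegral_congr fun x => habsnn _
      erw [heq]
      have h2 : 2 * ∫⁻ x, ENNReal.ofReal |ψ ‖x‖| ∂(volume.withDensity fun x : EuclideanSpace ℝ (Fin d) => ENNReal.ofReal (F x)) ≠ ∞ := by
        rw [hbridge]
        exact ENNReal.mul_ne_top hCt hfin
      exact Ne.lt_top (fun htop => h2 (by rw [htop, ENNReal.mul_top (by norm_num : (2:ℝ≥0∞) ≠ 0)]))
  have hΨintf : Integrable Ψ (volume.withDensity fun x : EuclideanSpace ℝ (Fin d) => ENNReal.ofReal (f x)) :=
    hΨint f mf hbfa hfinf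
  have hΨintg : Integrable Ψ (volume.withDensity fun x : EuclideanSpace ℝ (Fin d) => ENNReal.ofReal (g x)) :=
    hΨint g mg hbga hfing
  -- integral identities
  have hIf := integral_eq_lintegral_pos_part_sub_lintegral_neg_part hΨintf
  have hIg := integral_eq_lintegral_pos_part_sub_lintegral_neg_part hΨintg
  have hif := integral_eq_lintegral_pos_part_sub_lintegral_neg_part hψint_f
  have hig := integral_eq_lintegral_pos_part_sub_lintegral_neg_part hψint_g
  -- convert the bridges to real equalities
  have toRealify : ∀ (X A : ℝ≥0∞), 2 * X = C * A → 2 * X.toReal = C.toReal * A.toReal := by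
    intro X A h
    have := congrArg ENNReal.toReal h
    rwa [ENNReal.toReal_mul, ENNReal.toReal_mul, ENNReal.toReal_ofNat] at this
  have hrfp := toRealify _ _ hbfp
  have hrfm := toRealify _ _ hbfm
  have hrgp := toRealify _ _ hbgp
  have hrgm := toRealify _ _ hbgm
  have hcomp := hco Ψ hΨconv hΨintf hΨintg
  have hCtr : (0:ℝ) < C.toReal := ENNReal.toReal_pos hC0 hCt
  -- final arithmetic
  have hkeyf : 2 * ∫ x, Ψ x ∂(volume.withDensity fun x : EuclideanSpace ℝ (Fin d) => ENNReal.ofReal (f x))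
      = C.toReal * ∫ r, ψ r ∂mf := by
    rw [hIf, hif]
    have e1 : ∫⁻ x, ENNReal.ofReal (Ψ x) ∂(volume.withDensity fun x : EuclideanSpace ℝ (Fin d) => ENNReal.ofReal (f x))
        = ∫⁻ x, (fun r => ENNReal.ofReal (ψ r)) ‖x‖ ∂(volume.withDensity fun x : EuclideanSpace ℝ (Fin d) => ENNReal.ofReal (f x)) := rfl
    have e2 : ∫⁻ x, ENNReal.ofReal (-Ψ x) ∂(volume.withDensity fun x : EuclideanSpace ℝ (Fin d) => ENNReal.ofReal (f x))
        = ∫⁻ x, (fun r => ENNReal.ofReal (-ψ r)) ‖x‖ ∂(volume.withDensity fun x : EuclideanSpace ℝ (Fin d) => ENNReal.ofReal (f x)) := rfl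
    rw [e1, e2]
    rw [mul_sub, mul_sub]
    rw [hrfp, hrfm]
  have hkeyg : 2 * ∫ x, Ψ x ∂(volume.withDensity fun x : EuclideanSpace ℝ (Fin d) => ENNReal.ofReal (g x))
      = C.toReal * ∫ r, ψ r ∂mg := by
    rw [hIg, hig]
    rw [mul_sub, mul_sub]
    rw [hrgp, hrgm]
  have h2 : C.toReal * ∫ r, ψ r ∂mf ≤ C.toReal * ∫ r, ψ r ∂mg := by
    rw [← hkeyf, ← hkeyg]
    linarith
  exact le_of_mul_le_mul_left h2 hCtr
end
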